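/- Let a, b ≥ 0 and let X and Y be independent ℕ-valued random variables with X Poisson-distributed with parameter a and Y Poisson-distributed with parameter b. Set u = 1{X + Y is odd} − 1{X is odd}. Then for every integer k ≥ 1, E |u − E u|^k ≤ (2^k + 1) · P(Y > 0) = (2^k + 1)(1 − e^{−b}). -/

import Mathlib

open Filter Topology Real MeasureTheory ProbabilityTheory

/-- Inequality (4) of the paper: if `X ~ Poisson(a)` and `Y ~ Poisson(b)` are independent
and `u = 1{X + Y odd} − 1{X odd}`, then for every `k ≥ 1`,
`E|u − Eu|^k ≤ (2^k + 1) P(Y > 0) = (2^k + 1)(1 − e^{−b})`. -/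
theorem odd_occupancy_single_urn_moment_bound
    {Ω : Type*} [MeasurableSpace Ω] (P : Measure Ω) [IsProbabilityMeasure P]
    (a b : ℝ) (ha : 0 ≤ a) (hb : 0 ≤ b)
    (X Y : Ω → ℕ) (hX_meas : Measurable X) (hY_meas : Measurable Y)
    (h_indep : IndepFun X Y P)
    (hX : ∀ k : ℕ, (P {ω | X ω = k}).toReal = Real.exp (-a) * a ^ k / k.factorial)
    (hY : ∀ k : ℕ, (P {ω | Y ω = k}).toReal = Real.exp (-b) * b ^ k / k.factorial)
    (u : Ω → ℝ)
    (hu : ∀ ω, u ω = (if Odd (X ω + Y ω) then (1 : ℝ) else 0)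
      - (if Odd (X ω) then (1 : ℝ) else 0)) :
    ∀ k : ℕ, 1 ≤ k →
      (∫ ω, |u ω - ∫ ω', u ω' ∂P| ^ k ∂P)
          ≤ ((2 : ℝ) ^ k + 1) * (P {ω | 0 < Y ω}).toReal ∧
      ((2 : ℝ) ^ k + 1) * (P {ω | 0 < Y ω}).toReal
          = ((2 : ℝ) ^ k + 1) * (1 - Real.exp (-b)) := by
  intro k hk
  set s : Set Ω := {ω | 0 < Y ω} with hs_def
  have hsm : MeasurableSet s := measurableSet_lt measurable_const hY_meas
  -- second part: P(Y > 0) = 1 - e^{-b}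
  have hset : s = {ω | Y ω = 0}ᶜ := by
    ext ω; simp [hs_def, Nat.pos_iff_ne_zero]
  have hm0 : MeasurableSet {ω | Y ω = 0} := hY_meas (measurableSet_singleton 0)
  have h0 : (P {ω | Y ω = 0}).toReal = Real.exp (-b) := by simpa using hY 0
  have hPs : (P s).toReal = 1 - Real.exp (-b) := by
    rw [hset, measure_compl hm0 (measure_ne_top P _), measure_univ,
      ENNReal.toReal_sub_of_le prob_le_one ENNReal.one_ne_top, ENNReal.toReal_one, h0]
  refine ⟨?_, by rw [hPs]⟩
  -- measurability of u
  have hu_meas : Measurable u := by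
    have heq : u = fun ω => (if Odd (X ω + Y ω) then (1 : ℝ) else 0)
        - (if Odd (X ω) then (1 : ℝ) else 0) := funext hu
    rw [heq]
    exact Measurable.sub
      ((measurable_from_top (f := fun n : ℕ => if Odd n then (1:ℝ) else 0)).comp
        (hX_meas.add hY_meas))
      ((measurable_from_top (f := fun n : ℕ => if Odd n then (1:ℝ) else 0)).comp hX_meas)
  have hu_le : ∀ ω, |u ω| ≤ 1 := by
    intro ω; rw [hu]; split_ifs <;> norm_num
  have hu0 : ∀ ω, Y ω = 0 → u ω = 0 := by
    intro ω h; rw [hu, h]; simp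
  have hu_int : Integrable u P := by
    refine Integrable.mono' (integrable_const 1) hu_meas.aestronglyMeasurable ?_
    filter_upwards with ω
    simpa using hu_le ω
  set m := ∫ ω', u ω' ∂P with hm_def
  have hPs_le1 : (P s).toReal ≤ 1 := by
    have := ENNReal.toReal_mono (measure_ne_top P Set.univ) (measure_mono (Set.subset_univ s))
    simpa using this
  have hPsc_le1 : (P sᶜ).toReal ≤ 1 := by
    have := ENNReal.toReal_mono (measure_ne_top P Set.univ) (measure_mono (Set.subset_univ sᶜ))
    simpa using this
  have h_abs_u_le_ind : ∀ ω, |u ω| ≤ s.indicator (fun _ => (1:ℝ)) ω := by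
    intro ω
    by_cases h : ω ∈ s
    · rw [Set.indicator_of_mem h]; exact hu_le ω
    · rw [Set.indicator_of_notMem h]
      have hy : Y ω = 0 := by
        by_contra hne
        exact h (Nat.pos_of_ne_zero hne)
      simp [hu0 ω hy]
  have hind_int : Integrable (s.indicator (fun _ => (1:ℝ))) P :=
    (integrable_const (1:ℝ)).indicator hsm
  have habs : |m| ≤ ∫ ω, |u ω| ∂P := by
    simpa [Real.norm_eq_abs] using norm_integral_le_integral_norm u (μ := P)
  have hm_le : |m| ≤ (P s).toReal := by
    calc |m| ≤ ∫ ω, |u ω| ∂P := habs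
      _ ≤ ∫ ω, s.indicator (fun _ => (1:ℝ)) ω ∂P :=
        integral_mono hu_int.abs hind_int h_abs_u_le_ind
      _ = (P s).toReal := by
        rw [integral_indicator hsm]
        simp [Measure.restrict_apply_univ]
        rfl
  have hm_le1 : |m| ≤ 1 := hm_le.trans hPs_le1
  -- pointwise bound
  have hbound : ∀ ω, |u ω - m| ^ k ≤
      s.indicator (fun _ => (2:ℝ)^k) ω + sᶜ.indicator (fun _ => |m|^k) ω := by
    intro ω
    by_cases h : ω ∈ s
    · rw [Set.indicator_of_mem h, Set.indicator_of_notMem (by simpa using h)]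
      have h2 : |u ω - m| ≤ 2 := by
        calc |u ω - m| ≤ |u ω| + |m| := abs_sub _ _
          _ ≤ 1 + 1 := add_le_add (hu_le ω) hm_le1
          _ = 2 := by norm_num
      simpa using pow_le_pow_left₀ (abs_nonneg _) h2 k
    · rw [Set.indicator_of_notMem h, Set.indicator_of_mem (by simpa using h)]
      have hy : Y ω = 0 := by
        by_contra hne
        exact h (Nat.pos_of_ne_zero hne)
      rw [hu0 ω hy]
      simp
  -- integrability of the integrand
  have hint : Integrable (fun ω => |u ω - m| ^ k) P := by
    refine Integrable.mono' (integrable_const ((2:ℝ)^k))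
      ((((hu_meas.sub measurable_const).abs).pow_const k).aestronglyMeasurable) ?_
    filter_upwards with ω
    have h2 : |u ω - m| ≤ 2 := by
      calc |u ω - m| ≤ |u ω| + |m| := abs_sub _ _
        _ ≤ 1 + 1 := add_le_add (hu_le ω) hm_le1
        _ = 2 := by norm_num
    have := pow_le_pow_left₀ (abs_nonneg _) h2 k
    simpa [Real.norm_eq_abs, abs_pow, abs_abs] using this
  have hind2 : Integrable (fun ω => s.indicator (fun _ => (2:ℝ)^k) ω
      + sᶜ.indicator (fun _ => |m|^k) ω) P :=
    ((integrable_const _).indicator hsm).add ((integrable_const _).indicator hsm.compl)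
  have hintegral_bound : (∫ ω, |u ω - m| ^ k ∂P)
      ≤ (2:ℝ)^k * (P s).toReal + |m|^k * (P sᶜ).toReal := by
    calc (∫ ω, |u ω - m| ^ k ∂P)
        ≤ ∫ ω, (s.indicator (fun _ => (2:ℝ)^k) ω + sᶜ.indicator (fun _ => |m|^k) ω) ∂P :=
          integral_mono hint hind2 hbound
      _ = (2:ℝ)^k * (P s).toReal + |m|^k * (P sᶜ).toReal := by
          rw [integral_add ((integrable_const _).indicator hsm)
            ((integrable_const _).indicator hsm.compl),
            integral_indicator hsm, integral_indicator hsm.compl]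
          simp [Measure.restrict_apply_univ, mul_comm]
          rfl
  have hlast : |m|^k * (P sᶜ).toReal ≤ (P s).toReal := by
    calc |m|^k * (P sᶜ).toReal ≤ |m|^k * 1 :=
        mul_le_mul_of_nonneg_left hPsc_le1 (pow_nonneg (abs_nonneg _) k)
      _ = |m|^k := mul_one _
      _ ≤ |m|^1 := pow_le_pow_of_le_one (abs_nonneg _) hm_le1 hk
      _ = |m| := pow_one _
      _ ≤ (P s).toReal := hm_le
  calc (∫ ω, |u ω - m| ^ k ∂P)
      ≤ (2:ℝ)^k * (P s).toReal + |m|^k * (P sᶜ).toReal := hintegral_bound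
    _ ≤ (2:ℝ)^k * (P s).toReal + (P s).toReal := by linarith
    _ = ((2:ℝ)^k + 1) * (P s).toReal := by ring
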